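/- For the space-inhomogeneous half-plane model of the context, the following two functional equations hold in R[[t]]: F_0 = 1 + t·(y + y^{−1} + x)·F_1 + t·ΔF_1, and F_1 = t·(y + y^{−1} + x)·F_0 + t·x·(y + y^{−1})·F_1 + t·ΔF_0 + t·(y + y^{−1})·ΔF_1, where ΔG = (G − G(0,y))/x and G(0,y) denotes the series obtained by setting x = 0 in every t-coefficient of G. -/

import Mathlib

/-- The operator `Δ` on `R[[t]]` defined by `ΔG = (G − G(0,y))/x`,
acting on each `t`-coefficient (a polynomial in `x`) as `divX`. -/
noncomputable def seriesDeltaR {L : Type*} [CommRing L] (G : PowerSeries (Polynomial L)) :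
    PowerSeries (Polynomial L) :=
  PowerSeries.mk fun N => (PowerSeries.coeff N G).divX

private lemma lauT_mul_apply (k : ℤ) (q : LaurentPolynomial ℚ) (j : ℤ) :
    AddMonoidAlgebra.coeff (LaurentPolynomial.T k * q : LaurentPolynomial ℚ) j =
      AddMonoidAlgebra.coeff q (j - k) := by
  rw [LaurentPolynomial.T, AddMonoidAlgebra.coeff_single_mul_apply, one_mul,
    show -k + j = j - k from by ring]

private lemma lau_one_apply (j : ℤ) :
    AddMonoidAlgebra.coeff (1 : LaurentPolynomial ℚ) j = if j = 0 then 1 else 0 := by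
  rw [← LaurentPolynomial.T_zero, LaurentPolynomial.T, AddMonoidAlgebra.coeff_single,
    Finsupp.single_apply]
  simp [eq_comm]

private lemma lau_add_apply (q q' : LaurentPolynomial ℚ) (j : ℤ) :
    AddMonoidAlgebra.coeff (q + q' : LaurentPolynomial ℚ) j =
      AddMonoidAlgebra.coeff q j + AddMonoidAlgebra.coeff q' j := by
  rw [AddMonoidAlgebra.coeff_add]; rfl

private lemma lau_zero_apply (j : ℤ) : AddMonoidAlgebra.coeff (0 : LaurentPolynomial ℚ) j = 0 := rfl

theorem halfplane_space_inhomogeneous_functional_equations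
    (S0 : Finset (ℤ × ℤ)) (hS0 : S0 = {(1,0), (-1,0), (0,1), (0,-1)})
    (S1 : Finset (ℤ × ℤ))
    (hS1 : S1 = {(1,0), (-1,0), (0,1), (0,-1), (1,1), (1,-1), (-1,1), (-1,-1)})
    (f : ℤ → ℤ → ℕ → ℚ)
    (hfneg : ∀ i j n, i < 0 → f i j n = 0)
    (hf0 : ∀ i j : ℤ, 0 ≤ i → f i j 0 = if i = 0 ∧ j = 0 then 1 else 0)
    (hfrec : ∀ (i j : ℤ) (n : ℕ), 0 ≤ i →
      f i j (n + 1) = ∑ st ∈ S1,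
        if 0 ≤ i - st.1 ∧ st ∈ (if (i - st.1 + (j - st.2)) % 2 = 0 then S0 else S1)
          then f (i - st.1) (j - st.2) n else 0)
    (FF : Fin 2 → PowerSeries (Polynomial (LaurentPolynomial ℚ)))
    (hFF : ∀ (r : Fin 2) (n : ℕ) (i : ℕ) (j : ℤ),
      AddMonoidAlgebra.coeff ((PowerSeries.coeff n (FF r)).coeff i) j =
        if ((i : ℤ) + j) % 2 = ((r : ℕ) : ℤ) then f i j n else 0)
    -- abbreviations: x, y, y⁻¹, t as elements of R[[t]]
    (x y yinv t : PowerSeries (Polynomial (LaurentPolynomial ℚ)))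
    (hx : x = PowerSeries.C Polynomial.X)
    (hy : y = PowerSeries.C (Polynomial.C (LaurentPolynomial.T 1)))
    (hyinv : yinv = PowerSeries.C (Polynomial.C (LaurentPolynomial.T (-1))))
    (ht : t = PowerSeries.X) :
    FF 0 = 1 + t * (y + yinv + x) * FF 1 + t * seriesDeltaR (FF 1) ∧
    FF 1 = t * (y + yinv + x) * FF 0 + t * x * (y + yinv) * FF 1
            + t * seriesDeltaR (FF 0) + t * (y + yinv) * seriesDeltaR (FF 1) := by
  subst hS0 hS1 hx hy hyinv ht
  have hcut : ∀ (a b : ℤ) (m : ℕ), (if 0 ≤ a then f a b m else 0) = f a b m := by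
    intro a b m
    split_ifs with h
    · rfl
    · exact (hfneg _ _ _ (by omega)).symm
  have key0 : ∀ (i j : ℤ) (n : ℕ), 0 ≤ i → (i + j) % 2 = 0 →
      f i j (n+1) = f (i-1) j n + f (i+1) j n + f i (j-1) n + f i (j+1) n := by
    intro i j n hi hpar
    rw [hfrec i j n hi]
    rw [Finset.sum_insert (by decide), Finset.sum_insert (by decide), Finset.sum_insert (by decide),
      Finset.sum_insert (by decide), Finset.sum_insert (by decide), Finset.sum_insert (by decide),
      Finset.sum_insert (by decide), Finset.sum_singleton]
    simp only [show (i - 1 + (j - 0)) % 2 = 1 from by omega,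
      show (i - (-1) + (j - 0)) % 2 = 1 from by omega,
      show (i - 0 + (j - 1)) % 2 = 1 from by omega,
      show (i - 0 + (j - (-1))) % 2 = 1 from by omega,
      show (i - 1 + (j - 1)) % 2 = 0 from by omega,
      show (i - 1 + (j - (-1))) % 2 = 0 from by omega,
      show (i - (-1) + (j - 1)) % 2 = 0 from by omega,
      show (i - (-1) + (j - (-1))) % 2 = 0 from by omega]
    norm_num [Prod.ext_iff, hcut]
    split_ifs with h
    · ring
    · rw [hfneg (i-1) j n (by omega)]
      ring
  have key1 : ∀ (i j : ℤ) (n : ℕ), 0 ≤ i → (i + j) % 2 = 1 →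
      f i j (n+1) = f (i-1) j n + f (i+1) j n + f i (j-1) n + f i (j+1) n
        + f (i-1) (j-1) n + f (i-1) (j+1) n + f (i+1) (j-1) n + f (i+1) (j+1) n := by
    intro i j n hi hpar
    rw [hfrec i j n hi]
    rw [Finset.sum_insert (by decide), Finset.sum_insert (by decide), Finset.sum_insert (by decide),
      Finset.sum_insert (by decide), Finset.sum_insert (by decide), Finset.sum_insert (by decide),
      Finset.sum_insert (by decide), Finset.sum_singleton]
    simp only [show (i - 1 + (j - 0)) % 2 = 0 from by omega,
      show (i - (-1) + (j - 0)) % 2 = 0 from by omega,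
      show (i - 0 + (j - 1)) % 2 = 0 from by omega,
      show (i - 0 + (j - (-1))) % 2 = 0 from by omega,
      show (i - 1 + (j - 1)) % 2 = 1 from by omega,
      show (i - 1 + (j - (-1))) % 2 = 1 from by omega,
      show (i - (-1) + (j - 1)) % 2 = 1 from by omega,
      show (i - (-1) + (j - (-1))) % 2 = 1 from by omega]
    norm_num [Prod.ext_iff, hcut]
    split_ifs with h1
    · ring
    · rw [hfneg (i-1) j n (by omega), hfneg (i-1) (j-1) n (by omega),
        hfneg (i-1) (j+1) n (by omega)]
      ring
  constructor
  · apply PowerSeries.ext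
    intro n
    rcases n with _ | n
    · simp only [mul_assoc, map_add, PowerSeries.coeff_one, PowerSeries.coeff_zero_X_mul,
        add_zero, if_pos rfl]
      apply Polynomial.ext
      intro i
      apply AddMonoidAlgebra.ext
      apply Finsupp.ext
      intro j
      rw [hFF, hf0 _ _ (Int.natCast_nonneg i), if_pos trivial, Polynomial.coeff_one,
        apply_ite (fun q : LaurentPolynomial ℚ => AddMonoidAlgebra.coeff q j), lau_one_apply]
      simp only [Finsupp.coe_zero, Pi.zero_apply, Fin.isValue, Fin.val_zero, Nat.cast_zero]
      split_ifs <;> first | rfl | omega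
    · simp only [mul_assoc, map_add, PowerSeries.coeff_one, PowerSeries.coeff_succ_X_mul,
        Nat.succ_ne_zero, if_false, zero_add, seriesDeltaR, PowerSeries.coeff_mk, add_mul,
        PowerSeries.coeff_C_mul]
      apply Polynomial.ext
      intro i
      apply AddMonoidAlgebra.ext
      apply Finsupp.ext
      intro j
      simp only [Polynomial.coeff_add, Polynomial.coeff_C_mul, Polynomial.coeff_divX]
      rcases i with _ | k
      · rw [Polynomial.coeff_X_mul_zero]
        simp only [lau_add_apply, lau_zero_apply, lauT_mul_apply, hFF, Fin.isValue, Fin.val_zero,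
          Fin.val_one, Nat.cast_zero, Nat.cast_one]
        push_cast
        rw [show j - -1 = j + 1 from by ring]
        rcases Int.emod_two_eq (0 + j) with hp | hp
        · rw [if_pos hp, if_pos (by omega), if_pos (by omega), if_pos (by omega),
            key0 0 j n le_rfl (by omega), hfneg (0-1) j n (by omega)]
          norm_num
          ring
        · rw [if_neg (by omega), if_neg (by omega), if_neg (by omega), if_neg (by omega)]
          ring
      · rw [Polynomial.coeff_X_mul]
        simp only [lau_add_apply, lau_zero_apply, lauT_mul_apply, hFF, Fin.isValue, Fin.val_zero,
          Fin.val_one, Nat.cast_zero, Nat.cast_one]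
        push_cast
        rw [show j - -1 = j + 1 from by ring]
        rcases Int.emod_two_eq ((k:ℤ) + 1 + j) with hp | hp
        · rw [if_pos hp, if_pos (by omega), if_pos (by omega), if_pos (by omega),
            if_pos (by omega), key0 ((k:ℤ)+1) j n (by omega) hp,
            show (k:ℤ) + 1 - 1 = (k:ℤ) from by ring]
          ring
        · rw [if_neg (by omega), if_neg (by omega), if_neg (by omega), if_neg (by omega),
            if_neg (by omega)]
          ring
  · apply PowerSeries.ext
    intro n
    rcases n with _ | n
    · simp only [mul_assoc, map_add, PowerSeries.coeff_zero_X_mul, add_zero, zero_add]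
      apply Polynomial.ext
      intro i
      apply AddMonoidAlgebra.ext
      apply Finsupp.ext
      intro j
      rw [hFF, hf0 _ _ (Int.natCast_nonneg i)]
      simp only [Polynomial.coeff_zero, lau_zero_apply, Fin.isValue, Fin.val_one, Nat.cast_one]
      split_ifs <;> first | rfl | omega
    · simp only [mul_assoc, map_add, PowerSeries.coeff_succ_X_mul, seriesDeltaR,
        PowerSeries.coeff_mk, add_mul, PowerSeries.coeff_C_mul]
      apply Polynomial.ext
      intro i
      apply AddMonoidAlgebra.ext
      apply Finsupp.ext
      intro j
      simp only [Polynomial.coeff_add, Polynomial.coeff_C_mul, Polynomial.coeff_divX]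
      rcases i with _ | k
      · rw [Polynomial.coeff_X_mul_zero, Polynomial.coeff_X_mul_zero]
        simp only [lau_add_apply, lau_zero_apply, lauT_mul_apply, hFF, Fin.isValue, Fin.val_zero,
          Fin.val_one, Nat.cast_zero, Nat.cast_one]
        push_cast
        rw [show j - -1 = j + 1 from by ring]
        rcases Int.emod_two_eq (0 + j) with hp | hp
        · rw [if_neg (by omega), if_neg (by omega), if_neg (by omega), if_neg (by omega),
            if_neg (by omega), if_neg (by omega)]
          ring
        · rw [if_pos hp, if_pos (by omega), if_pos (by omega), if_pos (by omega),
            if_pos (by omega), if_pos (by omega),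
            key1 0 j n le_rfl (by omega), hfneg (0-1) j n (by omega),
            hfneg (0-1) (j-1) n (by omega), hfneg (0-1) (j+1) n (by omega)]
          norm_num
          ring
      · rw [Polynomial.coeff_X_mul, Polynomial.coeff_X_mul]
        simp only [Polynomial.coeff_add, Polynomial.coeff_C_mul, lau_add_apply, lau_zero_apply,
          lauT_mul_apply, hFF, Fin.isValue, Fin.val_zero, Fin.val_one, Nat.cast_zero, Nat.cast_one]
        push_cast
        rw [show j - -1 = j + 1 from by ring]
        rcases Int.emod_two_eq ((k:ℤ) + 1 + j) with hp | hp
        · rw [if_neg (by omega), if_neg (by omega), if_neg (by omega), if_neg (by omega),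
            if_neg (by omega), if_neg (by omega), if_neg (by omega), if_neg (by omega),
            if_neg (by omega)]
          ring
        · rw [if_pos hp, if_pos (by omega), if_pos (by omega), if_pos (by omega),
            if_pos (by omega), if_pos (by omega), if_pos (by omega), if_pos (by omega),
            if_pos (by omega), key1 ((k:ℤ)+1) j n (by omega) hp,
            show (k:ℤ) + 1 - 1 = (k:ℤ) from by ring]
          ring
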